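/- arXiv:2406.04422 — 2 statements merged into one kernel-verified Lean document; each statement's English description precedes it below -/
import Mathlib

section
/- Let g : [τ, s] → ℝ≥0 be continuous with g(s') ≤ e^{-(3/2)(s'-τ)} g(τ) + ∫_τ^{s'} e^{-(3/2)(s'-σ)} ( A² σ^{-3} log σ + C σ^{-2} + C A σ^{-2} + C e^{-σ/2} ) dσ for all s' ∈ [τ, s], where 1 ≤ τ ≤ s ≤ 2τ and A ≥ 1. Then g(s) ≤ e^{-(3/4)(s-τ)} g(τ) + C' A² / s² for a universal constant C'. -/
open Real intervalIntegral

lemma ker_int (τ s : ℝ) :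
    ∫ σ in τ..s, Real.exp (-(3 / 2) * (s - σ)) ≤ 2 / 3 := by
  have hderiv : ∀ σ ∈ Set.uIcc τ s,
      HasDerivAt (fun x => (2/3) * Real.exp (-(3/2) * (s - x)))
        (Real.exp (-(3/2) * (s - σ))) σ := by
    intro σ _
    have h1 : HasDerivAt (fun x : ℝ => -(3/2) * (s - x)) (3/2) σ := by
      have := ((hasDerivAt_id σ).const_sub s).const_mul (-(3/2) : ℝ)
      simpa using this
    have h3 := h1.exp.const_mul (2/3 : ℝ)
    refine h3.congr_deriv ?_
    ring
  have hcont : IntervalIntegrable (fun σ => Real.exp (-(3/2) * (s - σ)))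
      MeasureTheory.volume τ s := by
    apply Continuous.intervalIntegrable
    exact Real.continuous_exp.comp (continuous_const.mul (continuous_const.sub continuous_id))
  rw [intervalIntegral.integral_eq_sub_of_hasDerivAt hderiv hcont]
  have h1 : Real.exp (-(3/2) * (s - s)) = 1 := by simp
  have h2 : (0:ℝ) ≤ Real.exp (-(3/2) * (s - τ)) := (Real.exp_pos _).le
  nlinarith

set_option maxHeartbeats 1000000 in
/-- Duhamel-type estimate for the negative spectral part: the integral inequality
with decay `e^{-3(s'-τ)/2}` and the listed sources implies
`g(s) ≤ e^{-3(s-τ)/4} g(τ) + C' A²/s²` when `τ ≤ s ≤ 2τ`. -/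
theorem negative_part_estimate (C : ℝ) (hC : 0 < C) :
    ∃ C' > 0, ∀ (A τ s : ℝ) (g : ℝ → ℝ),
      1 ≤ A → 1 ≤ τ → τ ≤ s → s ≤ 2 * τ →
      ContinuousOn g (Set.Icc τ s) →
      (∀ x ∈ Set.Icc τ s, 0 ≤ g x) →
      (∀ s' ∈ Set.Icc τ s,
        g s' ≤ Real.exp (-(3 / 2) * (s' - τ)) * g τ +
          ∫ σ in τ..s', Real.exp (-(3 / 2) * (s' - σ)) *
            (A ^ 2 / σ ^ 3 * Real.log σ + C / σ ^ 2 + C * A / σ ^ 2 +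
              C * Real.exp (-σ / 2))) →
      g s ≤ Real.exp (-(3 / 4) * (s - τ)) * g τ + C' * A ^ 2 / s ^ 2 := by
  refine ⟨3 * (1 + 18 * C), by positivity, ?_⟩
  intro A τ s g hA hτ hτs hs2τ hgc hgnn hineq
  have hs1 : (1:ℝ) ≤ s := le_trans hτ hτs
  have hs0 : (0:ℝ) < s := by linarith
  have hA2 : (1:ℝ) ≤ A ^ 2 := by nlinarith
  have key := hineq s (Set.right_mem_Icc.mpr hτs)
  -- pointwise bound of the source
  have hpt : ∀ σ ∈ Set.Icc τ s,
      Real.exp (-(3/2) * (s - σ)) *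
        (A ^ 2 / σ ^ 3 * Real.log σ + C / σ ^ 2 + C * A / σ ^ 2 +
          C * Real.exp (-σ / 2)) ≤
      Real.exp (-(3/2) * (s - σ)) * (4 * (1 + 18 * C) * A ^ 2 / s ^ 2) := by
    intro σ hσ
    have hσ1 : (1:ℝ) ≤ σ := le_trans hτ hσ.1
    have hσ0 : (0:ℝ) < σ := by linarith
    have hσs : s ≤ 2 * σ := le_trans hs2τ (by linarith [hσ.1])
    apply mul_le_mul_of_nonneg_left _ (Real.exp_pos _).le
    have hlog : Real.log σ ≤ σ := (Real.log_le_sub_one_of_pos hσ0).trans (by linarith)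
    have t1 : A ^ 2 / σ ^ 3 * Real.log σ ≤ A ^ 2 / σ ^ 2 := by
      have h := mul_le_mul_of_nonneg_left hlog (by positivity : (0:ℝ) ≤ A ^ 2 / σ ^ 3)
      refine h.trans (le_of_eq ?_)
      field_simp
    have t2 : C / σ ^ 2 ≤ C * A ^ 2 / σ ^ 2 := by
      apply div_le_div_of_nonneg_right ?_ (by positivity)
      nlinarith
    have t3 : C * A / σ ^ 2 ≤ C * A ^ 2 / σ ^ 2 := by
      apply div_le_div_of_nonneg_right ?_ (by positivity)
      have hAA : A ≤ A ^ 2 := by nlinarith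
      nlinarith [mul_le_mul_of_nonneg_left hAA hC.le]
    have hexp : Real.exp (-σ / 2) ≤ 16 / σ ^ 2 := by
      have h4 : σ / 4 ≤ Real.exp (σ / 4) := by
        have := Real.add_one_le_exp (σ / 4); linarith
      have hsq : σ ^ 2 / 16 ≤ Real.exp (σ / 2) := by
        have hmul : Real.exp (σ/4) * Real.exp (σ/4) = Real.exp (σ/2) := by
          rw [← Real.exp_add]; ring_nf
        nlinarith [Real.exp_pos (σ/4)]
      have h0 : (0:ℝ) < σ ^ 2 / 16 := by positivity
      have heq : Real.exp (-σ/2) = (Real.exp (σ/2))⁻¹ := by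
        rw [← Real.exp_neg]; ring_nf
      rw [heq]
      calc (Real.exp (σ/2))⁻¹ ≤ (σ ^ 2 / 16)⁻¹ := inv_anti₀ h0 hsq
        _ = 16 / σ ^ 2 := by field_simp
    have t4 : C * Real.exp (-σ / 2) ≤ 16 * C * A ^ 2 / σ ^ 2 := by
      have h1 := mul_le_mul_of_nonneg_left hexp hC.le
      have h2 : C * (16 / σ ^ 2) ≤ 16 * C * A ^ 2 / σ ^ 2 := by
        rw [show C * (16 / σ ^ 2) = 16 * C / σ ^ 2 from by ring]
        apply div_le_div_of_nonneg_right ?_ (by positivity)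
        nlinarith [mul_le_mul_of_nonneg_left hA2 hC.le]
      exact h1.trans h2
    have hfrac : A ^ 2 / σ ^ 2 ≤ 4 * A ^ 2 / s ^ 2 := by
      rw [div_le_div_iff₀ (by positivity) (by positivity)]
      have hs2 : s ^ 2 ≤ 4 * σ ^ 2 := by nlinarith
      nlinarith [sq_nonneg A]
    have hfracC : (1 + 18 * C) * (A ^ 2 / σ ^ 2) ≤ (1 + 18 * C) * (4 * A ^ 2 / s ^ 2) :=
      mul_le_mul_of_nonneg_left hfrac (by positivity)
    have sum1 : A ^ 2 / σ ^ 3 * Real.log σ + C / σ ^ 2 + C * A / σ ^ 2 +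
        C * Real.exp (-σ / 2) ≤ (1 + 18 * C) * (A ^ 2 / σ ^ 2) := by
      have hexpand : (1 + 18 * C) * (A ^ 2 / σ ^ 2) =
          A ^ 2 / σ ^ 2 + C * A ^ 2 / σ ^ 2 + C * A ^ 2 / σ ^ 2 + 16 * C * A ^ 2 / σ ^ 2 := by
        ring
      rw [hexpand]
      linarith
    have hfin : (1 + 18 * C) * (4 * A ^ 2 / s ^ 2) = 4 * (1 + 18 * C) * A ^ 2 / s ^ 2 := by
      ring
    linarith [sum1.trans hfracC]
  -- integrability
  have hτ0 : ∀ σ ∈ Set.uIcc τ s, σ ≠ 0 := by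
    intro σ hσ
    rw [Set.uIcc_of_le hτs] at hσ
    have : (1:ℝ) ≤ σ := le_trans hτ hσ.1
    linarith
  have hf_int : IntervalIntegrable (fun σ => Real.exp (-(3/2) * (s - σ)) *
      (A ^ 2 / σ ^ 3 * Real.log σ + C / σ ^ 2 + C * A / σ ^ 2 +
        C * Real.exp (-σ / 2))) MeasureTheory.volume τ s := by
    apply ContinuousOn.intervalIntegrable
    apply ContinuousOn.mul
    · exact (Real.continuous_exp.comp (continuous_const.mul (continuous_const.sub continuous_id))).continuousOn
    · apply ContinuousOn.add
      apply ContinuousOn.add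
      apply ContinuousOn.add
      · exact (continuousOn_const.div (continuousOn_pow 3) (fun σ hσ => pow_ne_zero _ (hτ0 σ hσ))).mul
          (Real.continuousOn_log.mono (fun σ hσ => hτ0 σ hσ))
      · exact continuousOn_const.div (continuousOn_pow 2) (fun σ hσ => pow_ne_zero _ (hτ0 σ hσ))
      · exact continuousOn_const.div (continuousOn_pow 2) (fun σ hσ => pow_ne_zero _ (hτ0 σ hσ))
      · exact (continuous_const.mul (Real.continuous_exp.comp ((continuous_id.neg).div_const 2))).continuousOn
  have hg_int : IntervalIntegrable
      (fun σ => Real.exp (-(3/2) * (s - σ)) * (4 * (1 + 18 * C) * A ^ 2 / s ^ 2))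
      MeasureTheory.volume τ s := by
    apply Continuous.intervalIntegrable
    exact (Real.continuous_exp.comp (continuous_const.mul (continuous_const.sub continuous_id))).mul continuous_const
  have hint_mono : (∫ σ in τ..s, Real.exp (-(3/2) * (s - σ)) *
      (A ^ 2 / σ ^ 3 * Real.log σ + C / σ ^ 2 + C * A / σ ^ 2 +
        C * Real.exp (-σ / 2))) ≤
      ∫ σ in τ..s, Real.exp (-(3/2) * (s - σ)) * (4 * (1 + 18 * C) * A ^ 2 / s ^ 2) :=
    intervalIntegral.integral_mono_on hτs hf_int hg_int hpt
  have hker : (∫ σ in τ..s, Real.exp (-(3/2) * (s - σ)) * (4 * (1 + 18 * C) * A ^ 2 / s ^ 2))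
      ≤ (2/3) * (4 * (1 + 18 * C) * A ^ 2 / s ^ 2) := by
    rw [intervalIntegral.integral_mul_const]
    exact mul_le_mul_of_nonneg_right (ker_int τ s) (by positivity)
  have hexp_le : Real.exp (-(3/2) * (s - τ)) ≤ Real.exp (-(3/4) * (s - τ)) := by
    apply Real.exp_le_exp.mpr
    nlinarith
  have hgτ : 0 ≤ g τ := hgnn τ (Set.left_mem_Icc.mpr hτs)
  have hgmul : Real.exp (-(3/2) * (s - τ)) * g τ ≤ Real.exp (-(3/4) * (s - τ)) * g τ :=
    mul_le_mul_of_nonneg_right hexp_le hgτ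
  have hfinal : (2/3) * (4 * (1 + 18 * C) * A ^ 2 / s ^ 2) ≤ 3 * (1 + 18 * C) * A ^ 2 / s ^ 2 := by
    have hX : (0:ℝ) ≤ (1 + 18 * C) * A ^ 2 / s ^ 2 := by positivity
    have e1 : (2/3) * (4 * (1 + 18 * C) * A ^ 2 / s ^ 2) =
        (8/3) * ((1 + 18 * C) * A ^ 2 / s ^ 2) := by ring
    have e2 : 3 * (1 + 18 * C) * A ^ 2 / s ^ 2 = 3 * ((1 + 18 * C) * A ^ 2 / s ^ 2) := by ring
    rw [e1, e2]
    linarith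
  linarith [key, hint_mono.trans hker]
end

section
/- Let g : [τ, s] → ℝ≥0 be continuous satisfying g(s') ≤ e^{-(s'-τ)/(p-1)} g(τ) + ∫_τ^{s'} e^{-(s'-σ)/(p-1)} [ (1/(2(p-1))) g(σ) + C A²/√σ + (A²/σ)(1 - e^{-(s'-σ)})^{-1/2} ] dσ for all s' ∈ [τ, s], where p > 1, 1 ≤ τ ≤ s, A ≥ 1. Then g(s) ≤ e^{-(s-τ)/(2(p-1))} g(τ) + C' A² τ^{-1/2} (1 + s - τ) for a constant C' depending only on p and C. -/
open MeasureTheory Set intervalIntegral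

/-- Exact integral of a shifted/scaled exponential. -/
lemma exp_int (c d a b : ℝ) (hc : c ≠ 0) :
    ∫ x in a..b, Real.exp ((x - d) / c)
      = c * Real.exp ((b - d) / c) - c * Real.exp ((a - d) / c) := by
  have h : ∀ x ∈ Set.uIcc a b, HasDerivAt (fun y => c * Real.exp ((y - d) / c))
      (Real.exp ((x - d) / c)) x := by
    intro x _
    have h1 : HasDerivAt (fun y : ℝ => (y - d) / c) (1 / c) x := by
      simpa using ((hasDerivAt_id x).sub_const d).div_const c
    have h2 := ((Real.hasDerivAt_exp ((x - d) / c)).comp x h1).const_mul c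
    refine h2.congr_deriv ?_
    field_simp
  rw [intervalIntegral.integral_eq_sub_of_hasDerivAt h
    ((Real.continuous_exp.comp (by continuity)).intervalIntegrable a b)]

lemma rpow_base_quarter (x : ℝ) (hx : (1:ℝ)/4 ≤ x) :
    x ^ (-(1/2) : ℝ) ≤ 2 := by
  have h0 : (0:ℝ) < 1/4 := by norm_num
  have := Real.rpow_le_rpow_of_nonpos h0 hx (by norm_num : (-(1/2):ℝ) ≤ 0)
  refine this.trans ?_
  have h4 : ((1:ℝ)/4) ^ (-(1/2) : ℝ) = 2 := by
    rw [Real.rpow_neg (by norm_num), ← Real.sqrt_eq_rpow,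
      show ((1:ℝ)/4) = (1/2)^2 by norm_num, Real.sqrt_sq (by norm_num)]
    norm_num
  rw [h4]

lemma one_sub_exp_ge (u : ℝ) (hu : 0 < u) (hu1 : u ≤ 1) : u / 4 ≤ 1 - Real.exp (-u) := by
  have h1 : u + 1 ≤ Real.exp u := Real.add_one_le_exp u
  have he : Real.exp (-u) * Real.exp u = 1 := by rw [← Real.exp_add]; simp
  nlinarith [mul_le_mul_of_nonneg_left h1 (Real.exp_pos (-u)).le, Real.exp_pos (-u)]

lemma psi_small (u : ℝ) (hu : 0 < u) (hu1 : u ≤ 1) :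
    (1 - Real.exp (-u)) ^ (-(1/2) : ℝ) ≤ 2 * u ^ (-(1/2) : ℝ) := by
  have h := one_sub_exp_ge u hu hu1
  have h2 := Real.rpow_le_rpow_of_nonpos (by positivity : (0:ℝ) < u / 4) h
    (by norm_num : (-(1/2):ℝ) ≤ 0)
  refine h2.trans ?_
  have he : (u / 4 : ℝ) = u * (1/4) := by ring
  rw [he, Real.mul_rpow hu.le (by norm_num)]
  have h4 : ((1:ℝ)/4) ^ (-(1/2) : ℝ) = 2 := by
    rw [Real.rpow_neg (by norm_num), ← Real.sqrt_eq_rpow,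
      show ((1:ℝ)/4) = (1/2)^2 by norm_num, Real.sqrt_sq (by norm_num)]
    norm_num
  rw [h4]; ring_nf; exact le_refl _

lemma psi_large (u : ℝ) (hu : 1 ≤ u) :
    (1 - Real.exp (-u)) ^ (-(1/2) : ℝ) ≤ 2 := by
  apply rpow_base_quarter
  have h1 : Real.exp (-u) ≤ Real.exp (-1) := Real.exp_le_exp.2 (by linarith)
  have h2 : Real.exp (-1) ≤ 3/4 := by
    have := Real.add_one_le_exp (1:ℝ)
    have he : Real.exp (-1) * Real.exp 1 = 1 := by rw [← Real.exp_add]; simp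
    nlinarith [Real.exp_pos (-1)]
  linarith

noncomputable def psi (q u : ℝ) : ℝ :=
  Real.exp (-u / q) * (1 - Real.exp (-u)) ^ (-(1/2) : ℝ)

lemma psi_nonneg (q u : ℝ) (hu : 0 ≤ u) : 0 ≤ psi q u := by
  apply mul_nonneg (Real.exp_pos _).le
  apply Real.rpow_nonneg
  have : Real.exp (-u) ≤ 1 := Real.exp_le_one_iff.2 (by linarith)
  linarith

lemma psi_meas (q : ℝ) : Measurable (psi q) := by
  apply Measurable.mul
  · exact Real.measurable_exp.comp (measurable_neg.div_const q)
  · exact (measurable_const.sub (Real.measurable_exp.comp measurable_neg)).pow measurable_const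

lemma psi_le_small (q u : ℝ) (hq : 0 < q) (hu : 0 < u) (hu1 : u ≤ 1) :
    psi q u ≤ 2 * u ^ (-(1/2) : ℝ) := by
  have h1 : Real.exp (-u / q) ≤ 1 := Real.exp_le_one_iff.2 (div_nonpos_of_nonpos_of_nonneg (by linarith) hq.le)
  have h2 := psi_small u hu hu1
  have h3 : (0:ℝ) ≤ (1 - Real.exp (-u)) ^ (-(1/2) : ℝ) := by
    apply Real.rpow_nonneg
    have : Real.exp (-u) ≤ 1 := Real.exp_le_one_iff.2 (by linarith)
    linarith
  calc psi q u ≤ 1 * ((1 - Real.exp (-u)) ^ (-(1/2) : ℝ)) :=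
        mul_le_mul_of_nonneg_right h1 h3
    _ = (1 - Real.exp (-u)) ^ (-(1/2) : ℝ) := one_mul _
    _ ≤ 2 * u ^ (-(1/2) : ℝ) := h2

lemma psi_le_large (q u : ℝ) (hq : 0 < q) (hu : 1 ≤ u) :
    psi q u ≤ Real.exp (-u / q) * 2 :=
  mul_le_mul_of_nonneg_left (psi_large u hu) (Real.exp_pos _).le

lemma psi_int (q T : ℝ) (hq : 0 < q) (hT : 0 ≤ T) :
    IntervalIntegrable (psi q) MeasureTheory.volume 0 T := by
  have hm : IntervalIntegrable (fun u : ℝ => 2 * u ^ (-(1/2) : ℝ) + 2)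
      MeasureTheory.volume 0 T :=
    ((intervalIntegral.intervalIntegrable_rpow' (by norm_num)).const_mul 2).add
      intervalIntegrable_const
  apply hm.mono_fun' ((psi_meas q).aestronglyMeasurable)
  filter_upwards [MeasureTheory.ae_restrict_mem measurableSet_uIoc] with u hu
  rw [Set.uIoc_of_le hT] at hu
  have hu0 : 0 < u := hu.1
  have hup : (0:ℝ) ≤ u ^ (-(1/2) : ℝ) := Real.rpow_nonneg hu0.le _
  rw [Real.norm_eq_abs, abs_of_nonneg (psi_nonneg q u hu0.le)]
  rcases le_or_gt u 1 with h1 | h1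
  · have := psi_le_small q u hq hu0 h1
    linarith
  · have := psi_le_large q u hq h1.le
    have he : Real.exp (-u / q) ≤ 1 := Real.exp_le_one_iff.2 (div_nonpos_of_nonpos_of_nonneg (by linarith) hq.le)
    nlinarith [Real.exp_pos (-u / q)]

lemma psi_val_small (q T : ℝ) (hq : 0 < q) (hT0 : 0 ≤ T) (hT1 : T ≤ 1) :
    (∫ u in (0:ℝ)..T, psi q u) ≤ 4 := by
  have hr : IntervalIntegrable (fun u : ℝ => 2 * u ^ (-(1/2) : ℝ))
      MeasureTheory.volume 0 T :=
    (intervalIntegral.intervalIntegrable_rpow' (by norm_num)).const_mul 2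
  have h1 : (∫ u in (0:ℝ)..T, psi q u) ≤ ∫ u in (0:ℝ)..T, 2 * u ^ (-(1/2) : ℝ) := by
    apply intervalIntegral.integral_mono_on hT0 (psi_int q T hq hT0) hr
    intro u hu
    rcases eq_or_lt_of_le hu.1 with h0 | h0
    · rw [← h0]
      norm_num [psi, Real.zero_rpow (show (-(1/2):ℝ) ≠ 0 by norm_num)]
    · exact psi_le_small q u hq h0 (hu.2.trans hT1)
  have h2 : (∫ u in (0:ℝ)..T, 2 * u ^ (-(1/2) : ℝ)) = 4 * T ^ ((1:ℝ)/2) := by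
    rw [intervalIntegral.integral_const_mul, integral_rpow (Or.inl (by norm_num))]
    rw [Real.zero_rpow (by norm_num)]
    norm_num
    ring
  have h3 : T ^ ((1:ℝ)/2) ≤ 1 := Real.rpow_le_one hT0 hT1 (by norm_num)
  rw [h2] at h1
  linarith

lemma psi_val (q T : ℝ) (hq : 0 < q) (hT : 0 ≤ T) :
    (∫ u in (0:ℝ)..T, psi q u) ≤ 4 + 2 * q := by
  rcases le_or_gt T 1 with hT1 | hT1
  · have := psi_val_small q T hq hT hT1
    linarith
  · have h01 : IntervalIntegrable (psi q) MeasureTheory.volume 0 1 :=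
      psi_int q 1 hq (by norm_num)
    have h1T : IntervalIntegrable (psi q) MeasureTheory.volume 1 T := by
      apply (psi_int q T hq hT).mono_set'
      rw [Set.uIoc_of_le hT, Set.uIoc_of_le hT1.le]
      exact Set.Ioc_subset_Ioc (by norm_num) le_rfl
    rw [← intervalIntegral.integral_add_adjacent_intervals h01 h1T]
    have hA : (∫ u in (0:ℝ)..1, psi q u) ≤ 4 := psi_val_small q 1 hq (by norm_num) le_rfl
    have hB : (∫ u in (1:ℝ)..T, psi q u) ≤ 2 * q := by
      have hcont : IntervalIntegrable (fun u : ℝ => Real.exp (-u / q) * 2)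
          MeasureTheory.volume 1 T :=
        ((Real.continuous_exp.comp (by continuity)).mul continuous_const).intervalIntegrable 1 T
      have hmono : (∫ u in (1:ℝ)..T, psi q u) ≤
          ∫ u in (1:ℝ)..T, Real.exp (-u / q) * 2 := by
        apply intervalIntegral.integral_mono_on hT1.le h1T hcont
        intro u hu
        exact psi_le_large q u hq hu.1
      have hval : (∫ u in (1:ℝ)..T, Real.exp (-u / q) * 2)
          = 2 * ((-q) * Real.exp ((T - 0) / (-q)) - (-q) * Real.exp ((1 - 0) / (-q))) := by
        rw [show (∫ u in (1:ℝ)..T, Real.exp (-u / q) * 2)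
            = ∫ u in (1:ℝ)..T, 2 * Real.exp ((u - 0) / (-q)) from
          intervalIntegral.integral_congr fun x _ => by rw [sub_zero, div_neg, neg_div]; ring,
          intervalIntegral.integral_const_mul, exp_int (-q) 0 1 T (neg_ne_zero.2 hq.ne')]
      rw [hval] at hmono
      refine hmono.trans ?_
      have e1 : Real.exp ((1 - 0) / (-q)) > 0 := Real.exp_pos _
      have e2 : Real.exp ((T - 0) / (-q)) > 0 := Real.exp_pos _
      have e3 : Real.exp ((1 - 0) / (-q)) ≤ 1 := by
        apply Real.exp_le_one_iff.2
        rw [div_neg]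
        exact neg_nonpos.2 (by positivity)
      nlinarith
    linarith

set_option maxHeartbeats 2000000 in
lemma gronwall_aux (q τ s a B : ℝ) (g : ℝ → ℝ) (hq : 0 < q) (hτs : τ ≤ s)
    (ha : 0 ≤ a) (hB : 0 ≤ B) (hg : ContinuousOn g (Set.Icc τ s))
    (hyp : ∀ t ∈ Set.Icc τ s, g t ≤ Real.exp (-(t - τ) / q) * a
      + (1 / (2 * q)) * (∫ σ in τ..t, Real.exp (-(t - σ) / q) * g σ) + B) :
    g s ≤ Real.exp (-(s - τ) / (2 * q)) * a + 2 * B := by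
  have hq2 : (0:ℝ) < 2 * q := by linarith
  set φ : ℝ → ℝ := fun t => Real.exp ((t - τ) / q) * g t with hφdef
  have hφc : ContinuousOn φ (Set.Icc τ s) :=
    (Real.continuous_exp.comp (by continuity)).continuousOn.mul hg
  have hφint : ∀ t ∈ Set.Icc τ s, IntervalIntegrable φ MeasureTheory.volume τ t := by
    intro t ht
    apply ContinuousOn.intervalIntegrable
    rw [Set.uIcc_of_le ht.1]
    exact hφc.mono (Set.Icc_subset_Icc_right ht.2)
  set G : ℝ → ℝ := fun t => ∫ σ in τ..t, φ σ with hGdef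
  -- transformed inequality
  have hyp' : ∀ t ∈ Set.Icc τ s,
      φ t ≤ a + (1 / (2 * q)) * G t + B * Real.exp ((t - τ) / q) := by
    intro t ht
    have h := hyp t ht
    have hepos : (0:ℝ) < Real.exp ((t - τ) / q) := Real.exp_pos _
    have key : Real.exp ((t - τ) / q) * ∫ σ in τ..t, Real.exp (-(t - σ) / q) * g σ
        = G t := by
      rw [← intervalIntegral.integral_const_mul]
      apply intervalIntegral.integral_congr
      intro σ _
      simp only [hφdef]
      rw [← mul_assoc, ← Real.exp_add]
      congr 2
      ring
    have h2 := mul_le_mul_of_nonneg_left h hepos.le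
    have e1 : Real.exp ((t - τ) / q) * Real.exp (-(t - τ) / q) = 1 := by
      rw [← Real.exp_add, show (t - τ) / q + -(t - τ) / q = 0 by ring, Real.exp_zero]
    have expand : Real.exp ((t - τ) / q) * (Real.exp (-(t - τ) / q) * a
        + 1 / (2 * q) * (∫ σ in τ..t, Real.exp (-(t - σ) / q) * g σ) + B)
        = (Real.exp ((t - τ) / q) * Real.exp (-(t - τ) / q)) * a
          + 1 / (2 * q) * (Real.exp ((t - τ) / q) * ∫ σ in τ..t, Real.exp (-(t - σ) / q) * g σ)
          + B * Real.exp ((t - τ) / q) := by ring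
    rw [expand, e1, one_mul, key] at h2
    exact h2
  -- the comparison function
  set ρ : ℝ → ℝ := fun σ => Real.exp (-(σ - τ) / (2 * q)) * (a + B * Real.exp ((σ - τ) / q))
    with hρdef
  have hρc : Continuous ρ := by
    apply Continuous.mul
    · exact Real.continuous_exp.comp (by continuity)
    · exact continuous_const.add (continuous_const.mul (Real.continuous_exp.comp (by continuity)))
  set W : ℝ → ℝ := fun t => Real.exp (-(t - τ) / (2 * q)) * G t - ∫ σ in τ..t, ρ σ with hWdef
  have hWderiv : ∀ t ∈ Set.Ioo τ s, HasDerivAt W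
      ((-(1 / (2 * q)) * Real.exp (-(t - τ) / (2 * q))) * G t
        + Real.exp (-(t - τ) / (2 * q)) * φ t - ρ t) t := by
    intro t ht
    have htmem : t ∈ Set.Icc τ s := Set.Ioo_subset_Icc_self ht
    have hG : HasDerivAt G (φ t) t := by
      apply intervalIntegral.integral_hasDerivAt_right (hφint t htmem)
      · exact ContinuousOn.stronglyMeasurableAtFilter isOpen_Ioo
          (hφc.mono Set.Ioo_subset_Icc_self) t ht
      · exact hφc.continuousAt (Icc_mem_nhds ht.1 ht.2)
    have hE : HasDerivAt (fun y => Real.exp (-(y - τ) / (2 * q)))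
        (-(1 / (2 * q)) * Real.exp (-(t - τ) / (2 * q))) t := by
      have h1 : HasDerivAt (fun y : ℝ => -(y - τ) / (2 * q)) (-(1 / (2 * q))) t := by
        have := (((hasDerivAt_id t).sub_const τ).neg).div_const (2 * q)
        exact this.congr_deriv (by ring)
      have h2 := (Real.hasDerivAt_exp (-(t - τ) / (2 * q))).comp t h1
      exact h2.congr_deriv (by ring)
    have hI : HasDerivAt (fun y => ∫ σ in τ..y, ρ σ) (ρ t) t := by
      apply intervalIntegral.integral_hasDerivAt_right (hρc.intervalIntegrable τ t)
      · exact ⟨Set.univ, Filter.univ_mem, hρc.aestronglyMeasurable.restrict⟩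
      · exact hρc.continuousAt
    exact (hE.mul hG).sub hI
  have hWanti : AntitoneOn W (Set.Icc τ s) := by
    apply antitoneOn_of_deriv_nonpos (convex_Icc τ s)
    · apply ContinuousOn.sub
      · apply ContinuousOn.mul
        · exact (Real.continuous_exp.comp (by continuity)).continuousOn
        · have hint : MeasureTheory.IntegrableOn φ (Set.uIcc τ s) MeasureTheory.volume := by
            rw [Set.uIcc_of_le hτs]
            exact hφc.integrableOn_Icc
          have := intervalIntegral.continuousOn_primitive_interval hint
          rwa [Set.uIcc_of_le hτs] at this
      · have hint2 : MeasureTheory.IntegrableOn ρ (Set.uIcc τ s) MeasureTheory.volume := by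
          rw [Set.uIcc_of_le hτs]
          exact hρc.continuousOn.integrableOn_Icc
        have := intervalIntegral.continuousOn_primitive_interval hint2
        rwa [Set.uIcc_of_le hτs] at this
    · rw [interior_Icc]
      intro t ht
      exact (hWderiv t ht).differentiableAt.differentiableWithinAt
    · rw [interior_Icc]
      intro t ht
      rw [(hWderiv t ht).deriv]
      have h := hyp' t (Set.Ioo_subset_Icc_self ht)
      have hepos : (0:ℝ) < Real.exp (-(t - τ) / (2 * q)) := Real.exp_pos _
      have hρt : ρ t = Real.exp (-(t - τ) / (2 * q)) * (a + B * Real.exp ((t - τ) / q)) := rfl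
      nlinarith [mul_le_mul_of_nonneg_left h hepos.le]
  have hWs : W s ≤ 0 := by
    have := hWanti (Set.left_mem_Icc.2 hτs) (Set.right_mem_Icc.2 hτs) hτs
    have hWτ : W τ = 0 := by
      simp [hWdef, hGdef, intervalIntegral.integral_same]
    linarith
  -- value of the comparison integral
  have hcexp : ∀ c : ℝ, Continuous (fun σ : ℝ => Real.exp ((σ - τ) / c)) := fun c =>
    Real.continuous_exp.comp ((continuous_id.sub continuous_const).div_const c)
  have hint1 : IntervalIntegrable (fun σ : ℝ => a * Real.exp ((σ - τ) / (-(2*q))))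
      MeasureTheory.volume τ s :=
    (continuous_const.mul (hcexp (-(2*q)))).intervalIntegrable τ s
  have hint2 : IntervalIntegrable (fun σ : ℝ => B * Real.exp ((σ - τ) / (2*q)))
      MeasureTheory.volume τ s :=
    (continuous_const.mul (hcexp (2*q))).intervalIntegrable τ s
  have hρval : (∫ σ in τ..s, ρ σ)
      = a * ((-(2*q)) * Real.exp ((s - τ) / (-(2*q))) - (-(2*q)) * Real.exp ((τ - τ) / (-(2*q))))
        + B * ((2*q) * Real.exp ((s - τ) / (2*q)) - (2*q) * Real.exp ((τ - τ) / (2*q))) := by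
    have hsplit : (∫ σ in τ..s, ρ σ)
        = ∫ σ in τ..s,
            (a * Real.exp ((σ - τ) / (-(2*q))) + B * Real.exp ((σ - τ) / (2*q))) := by
      apply intervalIntegral.integral_congr
      intro σ _
      simp only [hρdef]
      rw [mul_add]
      congr 1
      · rw [mul_comm]
        congr 1
        rw [div_neg, neg_div]
      · rw [← mul_assoc, mul_comm (Real.exp (-(σ - τ) / (2 * q))) B, mul_assoc, ← Real.exp_add]
        congr 2
        field_simp
        ring
    rw [hsplit, intervalIntegral.integral_add hint1 hint2,
      intervalIntegral.integral_const_mul, intervalIntegral.integral_const_mul,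
      exp_int (-(2*q)) τ τ s (by intro h; nlinarith), exp_int (2*q) τ τ s (by positivity)]
  simp only [hWdef] at hWs
  set X := Real.exp ((s - τ) / (2 * q)) with hXdef
  set Y := Real.exp (-(s - τ) / (2 * q)) with hYdef
  have hXY : X * Y = 1 := by
    rw [hXdef, hYdef, ← Real.exp_add, show (s-τ)/(2*q) + -(s-τ)/(2*q) = 0 by ring,
      Real.exp_zero]
  have hY0 : (0:ℝ) < Y := Real.exp_pos _
  have hXX : X * X = Real.exp ((s - τ) / q) := by
    rw [hXdef, ← Real.exp_add]
    congr 1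
    field_simp
    ring
  have hIρ : (∫ σ in τ..s, ρ σ) = 2*q*a - 2*q*a*Y + 2*q*B*X - 2*q*B := by
    rw [hρval, hYdef, hXdef]
    simp only [sub_self, zero_div, Real.exp_zero]
    rw [div_neg, neg_div]
    ring
  have hYG : Y * G s ≤ 2*q*a - 2*q*a*Y + 2*q*B*X - 2*q*B := by
    rw [← hIρ]
    linarith
  have hYG' : (1/(2*q)) * (Y * G s) ≤ a - a*Y + B*X - B := by
    have h := mul_le_mul_of_nonneg_left hYG (by positivity : (0:ℝ) ≤ 1/(2*q))
    refine h.trans_eq ?_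
    field_simp
  have h2 := hyp' s (Set.right_mem_Icc.2 hτs)
  rw [← hXX] at h2
  have t1 := mul_le_mul_of_nonneg_left h2 (mul_pos hY0 hY0).le
  have t2 := mul_le_mul_of_nonneg_left hYG' hY0.le
  have e1 : g s = (Y*Y) * φ s := by
    have hφs : φ s = (X*X) * g s := by
      simp only [hφdef]
      rw [hXX]
    rw [hφs]
    linear_combination (-(g s) * (X*Y + 1)) * hXY
  have f1 : B * (X*Y) = B := by rw [hXY, mul_one]
  have f2 : B * ((X*Y)*(X*Y)) = B := by rw [hXY]; ring
  have f3 : (0:ℝ) ≤ B * Y := mul_nonneg hB hY0.le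
  nlinarith [t1, t2, e1, f1, f2, f3]



set_option maxHeartbeats 2000000 in
/-- Gronwall estimate for the outer part `q_e`: the Duhamel inequality with decay
`e^{-(s'-τ)/(p-1)}`, absorbable term `g/(2(p-1))` and the listed sources implies
`g(s) ≤ e^{-(s-τ)/(2(p-1))} g(τ) + C' A² τ^{-1/2}(1+s-τ)`. -/
theorem outer_part_estimate (p C : ℝ) (hp : 1 < p) (hC : 0 < C) :
    ∃ C' > 0, ∀ (A τ s : ℝ) (g : ℝ → ℝ),
      1 ≤ A → 1 ≤ τ → τ ≤ s →
      ContinuousOn g (Set.Icc τ s) →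
      (∀ x ∈ Set.Icc τ s, 0 ≤ g x) →
      (∀ s' ∈ Set.Icc τ s,
        g s' ≤ Real.exp (-(s' - τ) / (p - 1)) * g τ +
          ∫ σ in τ..s', Real.exp (-(s' - σ) / (p - 1)) *
            ((1 / (2 * (p - 1))) * g σ + C * A ^ 2 / Real.sqrt σ +
              (A ^ 2 / σ) * (1 - Real.exp (-(s' - σ))) ^ (-(1 / 2) : ℝ))) →
      g s ≤ Real.exp (-(s - τ) / (2 * (p - 1))) * g τ +
        C' * A ^ 2 / Real.sqrt τ * (1 + s - τ) := by
  have hq : 0 < p - 1 := by linarith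
  refine ⟨2 * C * (p - 1) + 8 + 4 * (p - 1), by nlinarith [mul_pos hC hq], ?_⟩
  intro A τ s g hA hτ hτs hgc hgnn hyp
  set q := p - 1 with hqdef
  have hτ0 : (0:ℝ) < τ := by linarith
  have hsτ : (0:ℝ) < Real.sqrt τ := Real.sqrt_pos.2 hτ0
  have hsτ1 : Real.sqrt τ ≤ τ := by
    nlinarith [Real.sq_sqrt hτ0.le, Real.one_le_sqrt.2 hτ, Real.sqrt_nonneg τ]
  have hA2 : (0:ℝ) ≤ A ^ 2 := sq_nonneg A
  set B := C * A ^ 2 / Real.sqrt τ * q + A ^ 2 / Real.sqrt τ * (4 + 2 * q) with hBdef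
  have hB0 : 0 ≤ B := by positivity
  have hyp2 : ∀ t ∈ Set.Icc τ s, g t ≤ Real.exp (-(t - τ) / q) * g τ
      + (1 / (2 * q)) * (∫ σ in τ..t, Real.exp (-(t - σ) / q) * g σ) + B := by
    intro t ht
    have hτt : τ ≤ t := ht.1
    have hts : t ≤ s := ht.2
    have hEc : Continuous (fun σ : ℝ => Real.exp (-(t - σ) / q)) :=
      Real.continuous_exp.comp (((continuous_const.sub continuous_id).neg).div_const q)
    have huIcc : Set.uIcc τ t = Set.Icc τ t := Set.uIcc_of_le hτt
    -- integrability of the three pieces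
    have h1int : IntervalIntegrable
        (fun σ => Real.exp (-(t - σ) / q) * ((1 / (2 * q)) * g σ))
        MeasureTheory.volume τ t := by
      apply ContinuousOn.intervalIntegrable
      rw [huIcc]
      exact hEc.continuousOn.mul (continuousOn_const.mul
        (hgc.mono (Set.Icc_subset_Icc_right hts)))
    have h2int : IntervalIntegrable
        (fun σ => Real.exp (-(t - σ) / q) * (C * A ^ 2 / Real.sqrt σ))
        MeasureTheory.volume τ t := by
      apply ContinuousOn.intervalIntegrable
      rw [huIcc]
      apply hEc.continuousOn.mul
      apply ContinuousOn.div continuousOn_const Real.continuous_sqrt.continuousOn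
      intro σ hσ
      exact (Real.sqrt_pos.2 (lt_of_lt_of_le hτ0 hσ.1)).ne'
    have hmajint : IntervalIntegrable (fun σ => A ^ 2 / τ * psi q (t - σ))
        MeasureTheory.volume τ t := by
      have h0 := psi_int q (t - τ) hq (by linarith)
      have h0' := h0.comp_sub_left t
      rw [sub_zero, sub_sub_cancel] at h0'
      exact (h0'.symm).const_mul _
    have hf3meas : Measurable
        (fun σ => Real.exp (-(t - σ) / q) *
          ((A ^ 2 / σ) * (1 - Real.exp (-(t - σ))) ^ (-(1 / 2) : ℝ))) := by
      apply Measurable.mul hEc.measurable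
      apply Measurable.mul (measurable_const.div measurable_id)
      exact (measurable_const.sub
        (Real.measurable_exp.comp (measurable_const.sub measurable_id).neg)).pow
        measurable_const
    have hf3eq : ∀ σ, Real.exp (-(t - σ) / q) *
        ((A ^ 2 / σ) * (1 - Real.exp (-(t - σ))) ^ (-(1 / 2) : ℝ))
        = (A ^ 2 / σ) * psi q (t - σ) := by
      intro σ
      simp only [psi]
      ring
    have hf3le : ∀ σ, τ ≤ σ → σ ≤ t → Real.exp (-(t - σ) / q) *
        ((A ^ 2 / σ) * (1 - Real.exp (-(t - σ))) ^ (-(1 / 2) : ℝ))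
        ≤ A ^ 2 / τ * psi q (t - σ) := by
      intro σ hσ1 hσ2
      rw [hf3eq σ]
      apply mul_le_mul_of_nonneg_right _ (psi_nonneg q _ (by linarith))
      gcongr
    have hf3nn : ∀ σ, τ ≤ σ → σ ≤ t → 0 ≤ Real.exp (-(t - σ) / q) *
        ((A ^ 2 / σ) * (1 - Real.exp (-(t - σ))) ^ (-(1 / 2) : ℝ)) := by
      intro σ hσ1 hσ2
      have hσ0 : 0 < σ := lt_of_lt_of_le hτ0 hσ1
      apply mul_nonneg (Real.exp_pos _).le
      apply mul_nonneg (by positivity)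
      apply Real.rpow_nonneg
      have : Real.exp (-(t - σ)) ≤ 1 := Real.exp_le_one_iff.2 (by linarith)
      linarith
    have h3int : IntervalIntegrable
        (fun σ => Real.exp (-(t - σ) / q) *
          ((A ^ 2 / σ) * (1 - Real.exp (-(t - σ))) ^ (-(1 / 2) : ℝ)))
        MeasureTheory.volume τ t := by
      apply hmajint.mono_fun' hf3meas.aestronglyMeasurable
      filter_upwards [MeasureTheory.ae_restrict_mem measurableSet_uIoc] with σ hσ
      rw [Set.uIoc_of_le hτt] at hσ
      rw [Real.norm_eq_abs, abs_of_nonneg (hf3nn σ hσ.1.le hσ.2)]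
      exact hf3le σ hσ.1.le hσ.2
    -- split the integral
    have hsplit : (∫ σ in τ..t, Real.exp (-(t - σ) / q) *
          ((1 / (2 * q)) * g σ + C * A ^ 2 / Real.sqrt σ +
            (A ^ 2 / σ) * (1 - Real.exp (-(t - σ))) ^ (-(1 / 2) : ℝ)))
        = (∫ σ in τ..t, Real.exp (-(t - σ) / q) * ((1 / (2 * q)) * g σ))
          + (∫ σ in τ..t, Real.exp (-(t - σ) / q) * (C * A ^ 2 / Real.sqrt σ))
          + (∫ σ in τ..t, Real.exp (-(t - σ) / q) *
              ((A ^ 2 / σ) * (1 - Real.exp (-(t - σ))) ^ (-(1 / 2) : ℝ))) := by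
      rw [← intervalIntegral.integral_add h1int h2int,
        ← intervalIntegral.integral_add (h1int.add h2int) h3int]
      apply intervalIntegral.integral_congr
      intro σ _
      simp only
      ring
    -- bound piece 1
    have hval1 : (∫ σ in τ..t, Real.exp (-(t - σ) / q) * ((1 / (2 * q)) * g σ))
        = (1 / (2 * q)) * ∫ σ in τ..t, Real.exp (-(t - σ) / q) * g σ := by
      rw [← intervalIntegral.integral_const_mul]
      apply intervalIntegral.integral_congr
      intro σ _
      simp only
      ring
    -- bound piece 2
    have hEint : (∫ σ in τ..t, Real.exp (-(t - σ) / q))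
        = q * Real.exp ((t - t) / q) - q * Real.exp ((τ - t) / q) := by
      rw [show (∫ σ in τ..t, Real.exp (-(t - σ) / q))
          = ∫ σ in τ..t, Real.exp ((σ - t) / q) from
        intervalIntegral.integral_congr fun σ _ => by rw [neg_sub]]
      exact exp_int q t τ t hq.ne'
    have hval2 : (∫ σ in τ..t, Real.exp (-(t - σ) / q) * (C * A ^ 2 / Real.sqrt σ))
        ≤ C * A ^ 2 / Real.sqrt τ * q := by
      have hstep : (∫ σ in τ..t, Real.exp (-(t - σ) / q) * (C * A ^ 2 / Real.sqrt σ))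
          ≤ ∫ σ in τ..t, Real.exp (-(t - σ) / q) * (C * A ^ 2 / Real.sqrt τ) := by
        apply intervalIntegral.integral_mono_on hτt h2int
          ((hEc.mul continuous_const).intervalIntegrable τ t)
        intro σ hσ
        apply mul_le_mul_of_nonneg_left _ (Real.exp_pos _).le
        beta_reduce
        gcongr
        exact hσ.1
      refine hstep.trans ?_
      rw [intervalIntegral.integral_mul_const, hEint]
      rw [sub_self, zero_div, Real.exp_zero]
      have he : (0:ℝ) < Real.exp ((τ - t) / q) := Real.exp_pos _
      have hK : (0:ℝ) ≤ C * A ^ 2 / Real.sqrt τ := by positivity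
      nlinarith [mul_nonneg (mul_nonneg hq.le he.le) hK]
    -- bound piece 3
    have hval3 : (∫ σ in τ..t, Real.exp (-(t - σ) / q) *
          ((A ^ 2 / σ) * (1 - Real.exp (-(t - σ))) ^ (-(1 / 2) : ℝ)))
        ≤ A ^ 2 / Real.sqrt τ * (4 + 2 * q) := by
      have hstep : (∫ σ in τ..t, Real.exp (-(t - σ) / q) *
            ((A ^ 2 / σ) * (1 - Real.exp (-(t - σ))) ^ (-(1 / 2) : ℝ)))
          ≤ ∫ σ in τ..t, A ^ 2 / τ * psi q (t - σ) := by
        apply intervalIntegral.integral_mono_on hτt h3int hmajint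
        intro σ hσ
        exact hf3le σ hσ.1 hσ.2
      refine hstep.trans ?_
      rw [intervalIntegral.integral_const_mul,
        intervalIntegral.integral_comp_sub_left (psi q) t, sub_self]
      have hψ := psi_val q (t - τ) hq (by linarith)
      have hττ : A ^ 2 / τ ≤ A ^ 2 / Real.sqrt τ := by gcongr
      have h1 : (0:ℝ) ≤ A ^ 2 / τ := by positivity
      have h2 : (0:ℝ) ≤ ∫ u in (0:ℝ)..(t - τ), psi q u := by
        apply intervalIntegral.integral_nonneg (by linarith)
        intro u hu
        exact psi_nonneg q u hu.1
      nlinarith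
    have h := hyp t ht
    rw [hsplit, hval1] at h
    have hBsum : (1 / (2 * q)) * (∫ σ in τ..t, Real.exp (-(t - σ) / q) * g σ)
        + C * A ^ 2 / Real.sqrt τ * q + A ^ 2 / Real.sqrt τ * (4 + 2 * q)
        = (1 / (2 * q)) * (∫ σ in τ..t, Real.exp (-(t - σ) / q) * g σ) + B := by
      rw [hBdef]; ring
    linarith
  have hmain := gronwall_aux q τ s (g τ) B g hq hτs
    (hgnn τ ⟨le_rfl, hτs⟩) hB0 hgc hyp2
  have hfin : 2 * B ≤ (2 * C * q + 8 + 4 * q) * A ^ 2 / Real.sqrt τ * (1 + s - τ) := by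
    have h2B : 2 * B = (2 * C * q + 8 + 4 * q) * A ^ 2 / Real.sqrt τ := by
      rw [hBdef]; field_simp; ring
    rw [h2B]
    have hco : (0:ℝ) < 2 * C * q + 8 + 4 * q := by nlinarith [mul_pos hC hq]
    have hpos : (0:ℝ) ≤ (2 * C * q + 8 + 4 * q) * A ^ 2 / Real.sqrt τ :=
      div_nonneg (mul_nonneg hco.le hA2) hsτ.le
    nlinarith
  linarith
end
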